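/- For a graph Laplacian L, s ∈ ℝ^n, edge Laplacian E of an edge not in L, with δ = χᵀz for z = (I+L)⁻¹s: adding the edge never increases polarization+disagreement, i.e., sᵀ(I+L+E)⁻¹s ≤ sᵀ(I+L)⁻¹s, with equality if and only if δ = 0. -/

import Mathlib

open Matrix

private lemma vmv_mulVec {n : ℕ} (a b x : Fin n → ℝ) :
    vecMulVec a b *ᵥ x = (b ⬝ᵥ x) • a := by
  ext i
  simp [vecMulVec_apply, mulVec, dotProduct, Finset.mul_sum, mul_comm, mul_assoc, mul_left_comm]

private lemma vmv_mul {n : ℕ} (M : Matrix (Fin n) (Fin n) ℝ) (a b : Fin n → ℝ) :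
    vecMulVec a b * M = vecMulVec a (b ᵥ* M) := by
  ext i j
  simp [vecMulVec_apply, Matrix.mul_apply, vecMul, dotProduct, Finset.mul_sum, mul_assoc]

theorem pd_edge_addition_never_increases {n : ℕ}
    (L : Matrix (Fin n) (Fin n) ℝ) (hL : L.PosSemidef)
    (s z χ : Fin n → ℝ) (u v : Fin n) (huv : u ≠ v)
    (hχu : χ u = 1) (hχv : χ v = -1)
    (hχ : ∀ w, w ≠ u → w ≠ v → χ w = 0)
    (E : Matrix (Fin n) (Fin n) ℝ) (hE : E = vecMulVec χ χ)
    (hz : z = (1 + L)⁻¹ *ᵥ s)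
    (δ : ℝ) (hδ : δ = z u - z v) :
    s ⬝ᵥ ((1 + L + E)⁻¹ *ᵥ s) ≤ s ⬝ᵥ ((1 + L)⁻¹ *ᵥ s) ∧
    (s ⬝ᵥ ((1 + L + E)⁻¹ *ᵥ s) = s ⬝ᵥ ((1 + L)⁻¹ *ᵥ s) ↔ δ = 0) := by
  set A := 1 + L with hAdef
  have hApd : A.PosDef := Matrix.PosDef.add_posSemidef Matrix.PosDef.one hL
  have hAinv : A⁻¹.PosDef := hApd.inv
  have hAsymm : Aᵀ = A := hApd.isHermitian
  have hAinvsymm : A⁻¹ᵀ = A⁻¹ := by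
    rw [Matrix.transpose_nonsing_inv, hAsymm]
  set r : ℝ := χ ⬝ᵥ (A⁻¹ *ᵥ χ) with hr
  have hr0 : 0 ≤ r := by
    simpa using hAinv.posSemidef.re_dotProduct_nonneg χ
  have h1r : (0:ℝ) < 1 + r := by linarith
  have h1r' : (1:ℝ) + r ≠ 0 := ne_of_gt h1r
  set c : ℝ := (1 + r)⁻¹ with hc
  have hcpos : 0 < c := inv_pos.2 h1r
  -- key algebraic identity : E * A⁻¹ * E = r • E
  have hEAE : E * A⁻¹ * E = r • E := by
    rw [hE, vmv_mul]
    ext i j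
    simp only [Matrix.mul_apply, vecMulVec_apply, Matrix.smul_apply, smul_eq_mul]
    have h1 : ∑ k, χ i * (χ ᵥ* A⁻¹) k * (χ k * χ j)
        = (χ i * χ j) * ((χ ᵥ* A⁻¹) ⬝ᵥ χ) := by
      simp only [dotProduct, Finset.mul_sum]
      exact Finset.sum_congr rfl fun k _ => by ring
    rw [h1, ← Matrix.dotProduct_mulVec, ← hr]
    ring
  -- Sherman-Morrison : the inverse of A + E
  set B : Matrix (Fin n) (Fin n) ℝ := A⁻¹ - c • (A⁻¹ * E * A⁻¹) with hB
  have hA1 : A * A⁻¹ = 1 := Matrix.mul_nonsing_inv A hApd.det_pos.ne'.isUnit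
  have hmain : (A + E) * B = 1 := by
    have hEexp : E * (A⁻¹ * E * A⁻¹) = r • (E * A⁻¹) := by
      calc E * (A⁻¹ * E * A⁻¹) = (E * A⁻¹ * E) * A⁻¹ := by
            rw [Matrix.mul_assoc, Matrix.mul_assoc, Matrix.mul_assoc]
        _ = r • (E * A⁻¹) := by rw [hEAE, Matrix.smul_mul]
    have hAexp : A * (A⁻¹ * E * A⁻¹) = E * A⁻¹ := by
      rw [Matrix.mul_assoc A⁻¹, ← Matrix.mul_assoc A, hA1, Matrix.one_mul]
    rw [hB, add_mul, mul_sub, mul_sub, Matrix.mul_smul, Matrix.mul_smul, hA1,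
      hAexp, hEexp, smul_smul]
    have hcc : c * r = 1 - c := by
      have hc1 : c * (1 + r) = 1 := by rw [hc]; exact inv_mul_cancel₀ h1r'
      linarith
    rw [hcc, sub_smul, one_smul]
    abel
  have hBinv : (A + E)⁻¹ = B := Matrix.inv_eq_right_inv hmain
  -- χ ⬝ᵥ z = δ
  have hχeq : χ = fun w => (if w = u then (1:ℝ) else 0) - (if w = v then 1 else 0) := by
    funext w
    by_cases hwu : w = u
    · subst hwu
      simp [hχu, if_neg huv]
    · by_cases hwv : w = v
      · subst hwv
        simp [hχv, hwu]
      · simp [hχ w hwu hwv, hwu, hwv]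
  have hχz : χ ⬝ᵥ z = δ := by
    rw [hδ, hχeq]
    simp [dotProduct, sub_mul, Finset.sum_sub_distrib, ite_mul]
  have hz' : A⁻¹ *ᵥ s = z := hz.symm
  -- s ⬝ᵥ (A⁻¹ *ᵥ χ) = δ
  have hsχ : s ⬝ᵥ (A⁻¹ *ᵥ χ) = δ := by
    rw [Matrix.dotProduct_mulVec, ← hAinvsymm, Matrix.vecMul_transpose, hz',
      dotProduct_comm, hχz]
  -- the main computation
  have hcomp : s ⬝ᵥ ((A + E)⁻¹ *ᵥ s) = s ⬝ᵥ (A⁻¹ *ᵥ s) - c * δ ^ 2 := by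
    rw [hBinv, hB, Matrix.sub_mulVec, Matrix.smul_mulVec, dotProduct_sub,
      dotProduct_smul]
    have : (A⁻¹ * E * A⁻¹) *ᵥ s = δ • (A⁻¹ *ᵥ χ) := by
      rw [Matrix.mul_assoc, ← Matrix.mulVec_mulVec, ← Matrix.mulVec_mulVec, hz',
        hE, vmv_mulVec, hχz, Matrix.mulVec_smul]
    rw [this, dotProduct_smul, smul_eq_mul, smul_eq_mul, hsχ]
    ring
  have hzz : s ⬝ᵥ ((1 + L)⁻¹ *ᵥ s) = s ⬝ᵥ (A⁻¹ *ᵥ s) := rfl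
  constructor
  · rw [hcomp, hzz]
    nlinarith [sq_nonneg δ, hcpos]
  · rw [hcomp, hzz]
    constructor
    · intro h
      have : c * δ ^ 2 = 0 := by linarith
      have := (mul_eq_zero.1 this).resolve_left (ne_of_gt hcpos)
      exact pow_eq_zero_iff (by norm_num) |>.1 this
    · intro h
      rw [h]
      ring
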